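/- For any permutation σ of [n], the number of cycles of σ is congruent modulo 2 to fix(σ) + cval(σ) + ucross(σ) + lcross(σ), where cval is the number of cycle valleys. -/

import Mathlib

open Finset

def fixCt {n : ℕ} (σ : Equiv.Perm (Fin n)) : ℕ :=
  (univ.filter fun i => σ i = i).card

def cpeakCt {n : ℕ} (σ : Equiv.Perm (Fin n)) : ℕ :=
  (univ.filter fun i => σ⁻¹ i < i ∧ σ i < i).card

def cvalCt {n : ℕ} (σ : Equiv.Perm (Fin n)) : ℕ :=
  (univ.filter fun i => i < σ⁻¹ i ∧ i < σ i).card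

def cdriseCt {n : ℕ} (σ : Equiv.Perm (Fin n)) : ℕ :=
  (univ.filter fun i => σ⁻¹ i < i ∧ i < σ i).card

def cdfallCt {n : ℕ} (σ : Equiv.Perm (Fin n)) : ℕ :=
  (univ.filter fun i => i < σ⁻¹ i ∧ σ i < i).card

def ucrossCt {n : ℕ} (σ : Equiv.Perm (Fin n)) : ℕ :=
  (univ.filter fun p : Fin n × Fin n × Fin n × Fin n =>
    p.1 < p.2.1 ∧ p.2.1 < p.2.2.1 ∧ p.2.2.1 < p.2.2.2 ∧
    p.2.2.1 = σ p.1 ∧ p.2.2.2 = σ p.2.1).card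

def lcrossCt {n : ℕ} (σ : Equiv.Perm (Fin n)) : ℕ :=
  (univ.filter fun p : Fin n × Fin n × Fin n × Fin n =>
    p.1 < p.2.1 ∧ p.2.1 < p.2.2.1 ∧ p.2.2.1 < p.2.2.2 ∧
    p.1 = σ p.2.2.1 ∧ p.2.1 = σ p.2.2.2).card

def unestCt {n : ℕ} (σ : Equiv.Perm (Fin n)) : ℕ :=
  (univ.filter fun p : Fin n × Fin n × Fin n × Fin n =>
    p.1 < p.2.1 ∧ p.2.1 < p.2.2.1 ∧ p.2.2.1 < p.2.2.2 ∧
    p.2.2.2 = σ p.1 ∧ p.2.2.1 = σ p.2.1).card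

def lnestCt {n : ℕ} (σ : Equiv.Perm (Fin n)) : ℕ :=
  (univ.filter fun p : Fin n × Fin n × Fin n × Fin n =>
    p.1 < p.2.1 ∧ p.2.1 < p.2.2.1 ∧ p.2.2.1 < p.2.2.2 ∧
    p.1 = σ p.2.2.2 ∧ p.2.1 = σ p.2.2.1).card

def psnestCt {n : ℕ} (σ : Equiv.Perm (Fin n)) : ℕ :=
  (univ.filter fun p : Fin n × Fin n × Fin n =>
    p.1 < p.2.1 ∧ p.2.1 < p.2.2 ∧ σ p.2.1 = p.2.1 ∧ σ p.1 = p.2.2).card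

def invCt {n : ℕ} (σ : Equiv.Perm (Fin n)) : ℕ :=
  (univ.filter fun p : Fin n × Fin n => p.1 < p.2 ∧ σ p.2 < σ p.1).card

/-- Number of cycles of a permutation, counting fixed points as cycles. -/
def cycCt {n : ℕ} (σ : Equiv.Perm (Fin n)) : ℕ :=
  σ.cycleType.card + fixCt σ

def ucrossAt {n : ℕ} (σ : Equiv.Perm (Fin n)) (j : Fin n) : ℕ :=
  (univ.filter fun p : Fin n × Fin n × Fin n =>
    p.1 < j ∧ j < p.2.1 ∧ p.2.1 < p.2.2 ∧ p.2.1 = σ p.1 ∧ p.2.2 = σ j).card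

def unestAt {n : ℕ} (σ : Equiv.Perm (Fin n)) (j : Fin n) : ℕ :=
  (univ.filter fun p : Fin n × Fin n × Fin n =>
    p.1 < j ∧ j < p.2.1 ∧ p.2.1 < p.2.2 ∧ p.2.1 = σ j ∧ p.2.2 = σ p.1).card

def lcrossAt {n : ℕ} (σ : Equiv.Perm (Fin n)) (k : Fin n) : ℕ :=
  (univ.filter fun p : Fin n × Fin n × Fin n =>
    p.1 < p.2.1 ∧ p.2.1 < k ∧ k < p.2.2 ∧ p.1 = σ k ∧ p.2.1 = σ p.2.2).card

def lnestAt {n : ℕ} (σ : Equiv.Perm (Fin n)) (k : Fin n) : ℕ :=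
  (univ.filter fun p : Fin n × Fin n × Fin n =>
    p.1 < p.2.1 ∧ p.2.1 < k ∧ k < p.2.2 ∧ p.1 = σ p.2.2 ∧ p.2.1 = σ k).card

/-- `i` is a record (left-to-right maximum) of `σ`. -/
def IsRecord {n : ℕ} (σ : Equiv.Perm (Fin n)) (i : Fin n) : Prop :=
  ∀ j, j < i → σ j < σ i

/-- `i` is an antirecord (right-to-left minimum) of `σ`. -/
def IsAntirecord {n : ℕ} (σ : Equiv.Perm (Fin n)) (i : Fin n) : Prop :=
  ∀ j, i < j → σ i < σ j

def ujoinCt {n : ℕ} (σ : Equiv.Perm (Fin n)) : ℕ :=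
  (univ.filter fun p : Fin n × Fin n × Fin n =>
    p.1 < p.2.1 ∧ p.2.1 < p.2.2 ∧ p.2.1 = σ p.1 ∧ p.2.2 = σ p.2.1).card

def ljoinCt {n : ℕ} (σ : Equiv.Perm (Fin n)) : ℕ :=
  (univ.filter fun p : Fin n × Fin n × Fin n =>
    p.1 < p.2.1 ∧ p.2.1 < p.2.2 ∧ p.1 = σ p.2.1 ∧ p.2.1 = σ p.2.2).card

theorem Equiv.Perm.inv_apply_self {α : Type*} (f : Equiv.Perm α) (x : α) : f⁻¹ (f x) = x :=
  Equiv.symm_apply_apply f x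

theorem Equiv.Perm.apply_inv_self {α : Type*} (f : Equiv.Perm α) (x : α) : f (f⁻¹ x) = x :=
  Equiv.apply_symm_apply f x

namespace CycParityAux

open Equiv Equiv.Perm Finset

variable {n : ℕ}

/-- indicator with values in `ZMod 2` -/
def ind (P : Prop) [Decidable P] : ZMod 2 := if P then 1 else 0

lemma ind_congr {P Q : Prop} [Decidable P] [Decidable Q] (h : P ↔ Q) : ind P = ind Q := by
  unfold ind; split_ifs with h1 h2 <;> first | rfl | (exfalso; tauto)

lemma ind_xor (P Q : Prop) [Decidable P] [Decidable Q] :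
    ind (P ∧ ¬Q) + ind (¬P ∧ Q) = ind P + ind Q := by
  unfold ind
  by_cases hP : P <;> by_cases hQ : Q <;> simp [hP, hQ] <;> decide

lemma z2add (x : ZMod 2) : x + x = 0 := by revert x; decide

def pF (σ : Perm (Fin n)) : ZMod 2 := ∑ i : Fin n, ind ((σ i).val = i.val)

def pV (σ : Perm (Fin n)) : ZMod 2 :=
  ∑ i : Fin n, ind (i.val < (σ⁻¹ i).val ∧ i.val < (σ i).val)

def pU (σ : Perm (Fin n)) : ZMod 2 :=
  ∑ a : Fin n, ∑ b : Fin n,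
    ind (a.val < b.val ∧ b.val < (σ a).val ∧ (σ a).val < (σ b).val)

def pL (σ : Perm (Fin n)) : ZMod 2 :=
  ∑ a : Fin n, ∑ b : Fin n,
    ind (a.val < b.val ∧ (σ a).val < (σ b).val ∧ (σ b).val < a.val)

lemma sum_gate (x : Fin n) (P : Fin n → Prop) [DecidablePred P] :
    (∑ a : Fin n, ind (a.val = x.val ∧ P a)) = ind (P x) := by
  have h : ∀ a : Fin n, ind (a.val = x.val ∧ P a) = if a = x then ind (P a) else 0 := by
    intro a
    by_cases hax : a = x
    · subst hax; simp only [if_pos]; exact ind_congr (by simp)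
    · rw [if_neg hax]
      have : ¬ (a.val = x.val) := fun hv => hax (Fin.val_injective hv)
      unfold ind; rw [if_neg (by tauto)]
  rw [Finset.sum_congr rfl (fun a _ => h a), Finset.sum_ite_eq' univ x (fun a => ind (P a)),
    if_pos (mem_univ x)]

lemma sum_gate_sigma (σ : Perm (Fin n)) (x : Fin n) (P : Fin n → Prop) [DecidablePred P] :
    (∑ a : Fin n, ind ((σ a).val = x.val ∧ P a)) = ind (P (σ⁻¹ x)) := by
  have h : ∀ a : Fin n, ind ((σ a).val = x.val ∧ P a) = ind (a.val = (σ⁻¹ x).val ∧ P a) := by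
    intro a
    refine ind_congr (and_congr_left fun _ => ?_)
    constructor
    · intro hv
      have : σ a = x := Fin.val_injective hv
      rw [← this, Equiv.Perm.inv_apply_self]
    · intro hv
      have : a = σ⁻¹ x := Fin.val_injective hv
      rw [this, Equiv.Perm.apply_inv_self]
  rw [Finset.sum_congr rfl (fun a _ => h a), sum_gate]

lemma balance (σ : Perm (Fin n)) (c : ℕ) :
    (∑ a : Fin n, ind (a.val < c ∧ ¬ (σ a).val < c)) +
      (∑ a : Fin n, ind (¬ a.val < c ∧ (σ a).val < c)) = 0 := by
  rw [← Finset.sum_add_distrib]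
  rw [Finset.sum_congr rfl (fun a _ =>
    ind_xor (a.val < c) ((σ a).val < c))]
  rw [Finset.sum_add_distrib]
  rw [Equiv.sum_comp σ (fun x : Fin n => ind (x.val < c))]
  exact z2add _

def eps (σ : Perm (Fin n)) : ZMod 2 := if Perm.sign σ = 1 then 0 else 1

lemma eps_pow (K : ℕ) (u : ℤˣ) (h : u = (-1) ^ K) :
    (if u = 1 then (0 : ZMod 2) else 1) = (K : ZMod 2) := by
  rcases Nat.even_or_odd K with he | ho
  · rw [h, he.neg_one_pow, if_pos rfl]
    obtain ⟨m, hm⟩ := he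
    subst hm; push_cast; rw [z2add]
  · rw [h, ho.neg_one_pow, if_neg (by decide)]
    obtain ⟨m, hm⟩ := ho
    subst hm; push_cast
    have h2 : (2 : ZMod 2) = 0 := by decide
    rw [h2]; ring

lemma eps_swap (σ : Perm (Fin n)) (s M : Fin n) (h : s ≠ M) :
    eps (σ * Equiv.swap s M) = eps σ + 1 := by
  unfold eps
  rw [Equiv.Perm.sign_mul, Equiv.Perm.sign_swap h]
  rcases Int.units_eq_one_or (Perm.sign σ) with h1 | h1 <;> rw [h1]
  · rw [if_pos rfl, if_neg (by decide)]; decide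
  · rw [if_pos (by decide), if_neg (by decide)]; decide

lemma fix_cast (σ : Perm (Fin n)) : ((fixCt σ : ℕ) : ZMod 2) = pF σ := by
  unfold fixCt pF
  rw [Finset.natCast_card_filter]
  refine Finset.sum_congr rfl fun i _ => ?_
  unfold ind
  exact if_congr (by exact Fin.val_inj.symm) rfl rfl

lemma cval_cast (σ : Perm (Fin n)) : ((cvalCt σ : ℕ) : ZMod 2) = pV σ := by
  unfold cvalCt pV
  rw [Finset.natCast_card_filter]
  refine Finset.sum_congr rfl fun i _ => ?_
  unfold ind
  exact if_congr (and_congr Fin.lt_def Fin.lt_def) rfl rfl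

lemma ucross_pair (σ : Perm (Fin n)) :
    ucrossCt σ =
      (univ.filter fun q : Fin n × Fin n => q.1 < q.2 ∧ q.2 < σ q.1 ∧ σ q.1 < σ q.2).card := by
  unfold ucrossCt
  refine Finset.card_nbij' (fun p => (p.1, p.2.1)) (fun q => (q.1, q.2, σ q.1, σ q.2))
    ?_ ?_ ?_ ?_
  · rintro ⟨i, j, k, l⟩ hp
    simp only [Finset.mem_coe, Finset.mem_filter, Finset.mem_univ, true_and] at hp ⊢
    obtain ⟨h1, h2, h3, h4, h5⟩ := hp
    subst h4; subst h5
    exact ⟨h1, h2, h3⟩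
  · rintro ⟨i, j⟩ hq
    simp only [Finset.mem_coe, Finset.mem_filter, Finset.mem_univ, true_and] at hq ⊢
    simp [hq.1, hq.2.1, hq.2.2]
  · rintro ⟨i, j, k, l⟩ hp
    simp only [Finset.mem_coe, Finset.mem_filter, Finset.mem_univ, true_and] at hp
    obtain ⟨h1, h2, h3, h4, h5⟩ := hp
    simp [h4, h5]
  · rintro ⟨i, j⟩ _
    rfl

lemma lcross_pair (σ : Perm (Fin n)) :
    lcrossCt σ =
      (univ.filter fun q : Fin n × Fin n => q.1 < q.2 ∧ σ q.1 < σ q.2 ∧ σ q.2 < q.1).card := by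
  unfold lcrossCt
  refine Finset.card_nbij' (fun p => (p.2.2.1, p.2.2.2)) (fun q => (σ q.1, σ q.2, q.1, q.2))
    ?_ ?_ ?_ ?_
  · rintro ⟨i, j, k, l⟩ hp
    simp only [Finset.mem_coe, Finset.mem_filter, Finset.mem_univ, true_and] at hp ⊢
    obtain ⟨h1, h2, h3, h4, h5⟩ := hp
    subst h4; subst h5
    exact ⟨h3, h1, h2⟩
  · rintro ⟨k, l⟩ hq
    simp only [Finset.mem_coe, Finset.mem_filter, Finset.mem_univ, true_and] at hq ⊢
    simp [hq.1, hq.2.1, hq.2.2]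
  · rintro ⟨i, j, k, l⟩ hp
    simp only [Finset.mem_coe, Finset.mem_filter, Finset.mem_univ, true_and] at hp
    obtain ⟨h1, h2, h3, h4, h5⟩ := hp
    simp [← h4, ← h5]
  · rintro ⟨k, l⟩ _
    rfl

lemma ucross_cast (σ : Perm (Fin n)) : ((ucrossCt σ : ℕ) : ZMod 2) = pU σ := by
  rw [ucross_pair, Finset.natCast_card_filter]
  unfold pU
  rw [Fintype.sum_prod_type]
  refine Finset.sum_congr rfl fun a _ => Finset.sum_congr rfl fun b _ => ?_
  unfold ind
  exact if_congr (and_congr Fin.lt_def (and_congr Fin.lt_def Fin.lt_def)) rfl rfl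

lemma lcross_cast (σ : Perm (Fin n)) : ((lcrossCt σ : ℕ) : ZMod 2) = pL σ := by
  rw [lcross_pair, Finset.natCast_card_filter]
  unfold pL
  rw [Fintype.sum_prod_type]
  refine Finset.sum_congr rfl fun a _ => Finset.sum_congr rfl fun b _ => ?_
  unfold ind
  exact if_congr (and_congr Fin.lt_def (and_congr Fin.lt_def Fin.lt_def)) rfl rfl

lemma cyc_eps (σ : Perm (Fin n)) : ((cycCt σ : ℕ) : ZMod 2) = (n : ZMod 2) + eps σ := by
  have hsign := Equiv.Perm.sign_of_cycleType σ
  have h1 : eps σ = ((σ.cycleType.sum + Multiset.card σ.cycleType : ℕ) : ZMod 2) :=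
    eps_pow _ _ hsign
  have h2 : σ.cycleType.sum = σ.support.card := Equiv.Perm.sum_cycleType σ
  have hsupp : σ.support = univ.filter fun x => ¬ σ x = x := by
    ext x; simp [Equiv.Perm.mem_support]
  have h3 : σ.support.card + fixCt σ = n := by
    rw [hsupp]
    unfold fixCt
    rw [add_comm]
    rw [Finset.card_filter_add_card_filter_not (fun x => σ x = x)]
    simp
  have h4 : cycCt σ = Multiset.card σ.cycleType + fixCt σ := rfl
  have key : ∀ supp ct fix nn e : ZMod 2,
      e = supp + ct → supp + fix = nn → ct + fix = nn + e := by decide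
  have h1' : eps σ = ((σ.support.card : ℕ) : ZMod 2)
      + ((Multiset.card σ.cycleType : ℕ) : ZMod 2) := by
    rw [h1, ← h2]; push_cast; ring
  have h3' : ((σ.support.card : ℕ) : ZMod 2) + ((fixCt σ : ℕ) : ZMod 2) = (n : ZMod 2) := by
    rw [← Nat.cast_add, h3]
  rw [h4]
  push_cast
  exact key _ _ _ _ _ h1' h3'

lemma sum_gate' (x : Fin n) : (∑ a : Fin n, ind (a.val = x.val)) = 1 := by
  have h : (∑ a : Fin n, ind (a.val = x.val)) = ∑ a : Fin n, ind (a.val = x.val ∧ True) :=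
    Finset.sum_congr rfl fun a _ => ind_congr (by tauto)
  rw [h, sum_gate x (fun _ => True)]
  unfold ind
  rw [if_pos trivial]

lemma sum_ind_zero (P : Fin n → Prop) [DecidablePred P] (h : ∀ a, ¬ P a) :
    (∑ a : Fin n, ind (P a)) = 0 :=
  Finset.sum_eq_zero fun a _ => by unfold ind; rw [if_neg (h a)]

lemma gate_outer (x : Fin n) (Q : Fin n → Prop) [DecidablePred Q] :
    (∑ a : Fin n, ∑ b : Fin n, ind (a.val = x.val ∧ Q b)) = ∑ b : Fin n, ind (Q b) := by
  rw [Finset.sum_comm]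
  exact Finset.sum_congr rfl fun b _ => sum_gate x (fun _ => Q b)

lemma gate_inner (x : Fin n) (Q : Fin n → Prop) [DecidablePred Q] :
    (∑ a : Fin n, ∑ b : Fin n, ind (b.val = x.val ∧ Q a)) = ∑ a : Fin n, ind (Q a) :=
  Finset.sum_congr rfl fun a _ => sum_gate x (fun _ => Q a)

lemma single_reduce (f g h1 : Fin n → ZMod 2) (ptw : ∀ i, f i + g i = h1 i) :
    (∑ i : Fin n, f i) + (∑ i : Fin n, g i) = ∑ i : Fin n, h1 i := by
  rw [← Finset.sum_add_distrib]
  exact Finset.sum_congr rfl fun i _ => ptw i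

lemma single_reduce2 (f g h1 h2 : Fin n → ZMod 2) (ptw : ∀ i, f i + g i = h1 i + h2 i) :
    (∑ i : Fin n, f i) + (∑ i : Fin n, g i) =
      (∑ i : Fin n, h1 i) + (∑ i : Fin n, h2 i) := by
  rw [← Finset.sum_add_distrib, ← Finset.sum_add_distrib]
  exact Finset.sum_congr rfl fun i _ => ptw i

lemma double_reduce (f g h1 h2 h3 : Fin n → Fin n → ZMod 2)
    (ptw : ∀ a b, f a b + g a b = h1 a b + h2 a b + h3 a b) :
    (∑ a : Fin n, ∑ b : Fin n, f a b) + (∑ a : Fin n, ∑ b : Fin n, g a b) =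
      (∑ a : Fin n, ∑ b : Fin n, h1 a b) + (∑ a : Fin n, ∑ b : Fin n, h2 a b) +
        (∑ a : Fin n, ∑ b : Fin n, h3 a b) := by
  rw [← Finset.sum_add_distrib, ← Finset.sum_add_distrib, ← Finset.sum_add_distrib]
  refine Finset.sum_congr rfl fun a _ => ?_
  rw [← Finset.sum_add_distrib, ← Finset.sum_add_distrib, ← Finset.sum_add_distrib]
  exact Finset.sum_congr rfl fun b _ => ptw a b

lemma quad_reduce (f1 f2 f3 f4 g1 g2 g3 g4 : Fin n → ZMod 2)
    (ptw : ∀ i, f1 i + f2 i + f3 i + f4 i = g1 i + g2 i + g3 i + g4 i) :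
    (∑ i : Fin n, f1 i) + (∑ i : Fin n, f2 i) + (∑ i : Fin n, f3 i) + (∑ i : Fin n, f4 i) =
      (∑ i : Fin n, g1 i) + (∑ i : Fin n, g2 i) + (∑ i : Fin n, g3 i) +
        (∑ i : Fin n, g4 i) := by
  rw [← Finset.sum_add_distrib, ← Finset.sum_add_distrib, ← Finset.sum_add_distrib,
    ← Finset.sum_add_distrib, ← Finset.sum_add_distrib, ← Finset.sum_add_distrib]
  exact Finset.sum_congr rfl fun i _ => ptw i

lemma pair_reduce (f1 f2 g1 g2 : Fin n → ZMod 2)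
    (ptw : ∀ i, f1 i + f2 i = g1 i + g2 i) :
    (∑ i : Fin n, f1 i) + (∑ i : Fin n, f2 i) =
      (∑ i : Fin n, g1 i) + (∑ i : Fin n, g2 i) := by
  rw [← Finset.sum_add_distrib, ← Finset.sum_add_distrib]
  exact Finset.sum_congr rfl fun i _ => ptw i

set_option maxHeartbeats 1600000 in
lemma ptwF_nat (A SA TA sv tv Mv : ℕ)
    (h2 : A = sv → SA = Mv) (h3 : A = Mv → SA = tv)
    (k1 : A = sv → TA = tv) (k2 : A = Mv → TA = Mv)
    (k3 : A ≠ sv → A ≠ Mv → TA = SA)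
    (hsv : sv < Mv) (htv : tv < Mv) :
    ind (SA = A) + ind (TA = A) = ind (A = sv ∧ tv = sv) + ind (A = Mv) := by
  unfold ind; split_ifs <;> first | decide | (exfalso; omega)

set_option maxHeartbeats 1600000 in
lemma ptwU_nat (A B SA SB TA TB sv tv Mv : ℕ)
    (h2a : A = sv → SA = Mv) (h3a : A = Mv → SA = tv)
    (k1a : A = sv → TA = tv) (k2a : A = Mv → TA = Mv)
    (k3a : A ≠ sv → A ≠ Mv → TA = SA)
    (h1b : SB = Mv → B = sv) (h2b : B = sv → SB = Mv) (h3b : B = Mv → SB = tv)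
    (h4b : Mv < SB → SB = B)
    (k1b : B = sv → TB = tv) (k2b : B = Mv → TB = Mv)
    (k3b : B ≠ sv → B ≠ Mv → TB = SB)
    (hsv : sv < Mv) (htv : tv < Mv) :
    ind (A < B ∧ B < SA ∧ SA < SB) + ind (A < B ∧ B < TA ∧ TA < TB) =
      ind (A = sv ∧ sv < B ∧ B < tv ∧ tv < SB) +
        ind (B = sv ∧ A < sv ∧ sv < SA ∧ SA < Mv) +
        ind (B = sv ∧ A < sv ∧ sv < SA ∧ SA < tv) := by
  unfold ind; split_ifs <;> first | decide | (exfalso; omega)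

set_option maxHeartbeats 1600000 in
lemma ptwL_nat (A B SA SB TA TB sv tv Mv : ℕ)
    (h2a : A = sv → SA = Mv) (h3a : A = Mv → SA = tv)
    (k1a : A = sv → TA = tv)
    (k3a : A ≠ sv → A ≠ Mv → TA = SA)
    (h2b : B = sv → SB = Mv) (h3b : B = Mv → SB = tv)
    (h5b : Mv < B → SB = B)
    (k1b : B = sv → TB = tv) (k2b : B = Mv → TB = Mv)
    (k3b : B ≠ sv → B ≠ Mv → TB = SB)
    (k5b : Mv < B → TB = B)
    (hsv : sv < Mv) (htv : tv < Mv) :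
    ind (A < B ∧ SA < SB ∧ SB < A) + ind (A < B ∧ TA < TB ∧ TB < A) =
      ind (B = Mv ∧ A < Mv ∧ SA < tv ∧ tv < A) +
        ind (A = sv ∧ sv < B ∧ tv < SB ∧ SB < sv) +
        ind (B = sv ∧ A < sv ∧ SA < tv ∧ tv < A) := by
  unfold ind; split_ifs <;> first | decide | (exfalso; omega)

set_option maxHeartbeats 1600000 in
lemma ptwVB_nat (A SA TA RA RTA sv tv Mv : ℕ)
    (h2 : A = sv → SA = Mv) (k1 : A = sv → TA = tv)
    (k3 : A ≠ sv → A ≠ Mv → TA = SA)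
    (m1 : A = Mv → RA = sv) (m2 : A = tv → RA = Mv)
    (m3 : A = Mv → RTA = Mv) (m4 : A = tv → RTA = sv)
    (m5 : A ≠ Mv → A ≠ tv → RTA = RA)
    (hsv : sv < Mv) (htv : tv < Mv) (hts : tv < sv) :
    ind (A < RA ∧ A < SA) + ind (A < RTA ∧ A < TA) = ind (A = sv ∧ sv < RA) := by
  unfold ind; split_ifs <;> first | decide | (exfalso; omega)

set_option maxHeartbeats 1600000 in
lemma ptwVA_nat (A SA TA RA RTA sv tv Mv : ℕ)
    (h2 : A = sv → SA = Mv) (k1 : A = sv → TA = tv)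
    (k3 : A ≠ sv → A ≠ Mv → TA = SA)
    (m1 : A = Mv → RA = sv) (m2 : A = tv → RA = Mv)
    (m3 : A = Mv → RTA = Mv)
    (m5 : A ≠ Mv → A ≠ tv → RTA = RA)
    (hsv : sv < Mv) (htv : tv < Mv) (hts : tv = sv) :
    ind (A < RA ∧ A < SA) + ind (A < RTA ∧ A < TA) = ind (A = sv) := by
  unfold ind; split_ifs <;> first | decide | (exfalso; omega)

set_option maxHeartbeats 1600000 in
lemma ptwVC_nat (A SA TA RA RTA sv tv Mv : ℕ)
    (h2 : A = sv → SA = Mv) (k1 : A = sv → TA = tv)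
    (k3 : A ≠ sv → A ≠ Mv → TA = SA)
    (m1 : A = Mv → RA = sv) (m2 : A = tv → RA = Mv)
    (m3 : A = Mv → RTA = Mv) (m4 : A = tv → RTA = sv)
    (m5 : A ≠ Mv → A ≠ tv → RTA = RA)
    (hsv : sv < Mv) (htv : tv < Mv) (hts : sv < tv) :
    ind (A < RA ∧ A < SA) + ind (A < RTA ∧ A < TA) = ind (A = tv ∧ tv < SA) := by
  unfold ind; split_ifs <;> first | decide | (exfalso; omega)

set_option maxHeartbeats 3200000 in
lemma asmB_nat (A SA sv tv Mv : ℕ)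
    (h1 : SA = Mv → A = sv) (h2 : A = sv → SA = Mv) (h3 : A = Mv → SA = tv)
    (h4 : Mv < SA → SA = A) (h5 : Mv < A → SA = A) (h6 : SA = tv → A = Mv)
    (hsv : sv < Mv) (htv : tv < Mv) (hts : tv < sv) :
    ind (A < sv ∧ sv < SA ∧ SA < Mv) + ind (A < Mv ∧ SA < tv ∧ tv < A) +
      ind (sv < A ∧ tv < SA ∧ SA < sv) + ind (A < sv ∧ SA < tv ∧ tv < A) =
    ind (A < sv ∧ ¬ SA < sv) + ind (¬ A < sv ∧ SA < sv) +
      ind (A = Mv) + ind (SA = sv ∧ A < sv) := by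
  unfold ind; split_ifs <;> first | decide | (exfalso; omega)

set_option maxHeartbeats 1600000 in
lemma asmA_nat (A SA sv tv Mv : ℕ)
    (h1 : SA = Mv → A = sv) (h2 : A = sv → SA = Mv) (h3 : A = Mv → SA = tv)
    (h4 : Mv < SA → SA = A) (h5 : Mv < A → SA = A) (h6 : SA = tv → A = Mv)
    (hsv : sv < Mv) (htv : tv < Mv) (hts : tv = sv) :
    ind (A < sv ∧ sv < SA ∧ SA < Mv) + ind (A < Mv ∧ SA < tv ∧ tv < A) =
    ind (A < sv ∧ ¬ SA < sv) + ind (¬ A < sv ∧ SA < sv) := by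
  unfold ind; split_ifs <;> first | decide | (exfalso; omega)

set_option maxHeartbeats 3200000 in
lemma asmC_nat (A SA sv tv Mv : ℕ)
    (h1 : SA = Mv → A = sv) (h2 : A = sv → SA = Mv) (h3 : A = Mv → SA = tv)
    (h4 : Mv < SA → SA = A) (h5 : Mv < A → SA = A) (h6 : SA = tv → A = Mv)
    (hsv : sv < Mv) (htv : tv < Mv) (hts : sv < tv) :
    ind (sv < A ∧ A < tv ∧ tv < SA) + ind (A < sv ∧ sv < SA ∧ SA < Mv) +
      ind (A < sv ∧ sv < SA ∧ SA < tv) + ind (A < Mv ∧ SA < tv ∧ tv < A) =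
    ind (A < tv ∧ ¬ SA < tv) + ind (¬ A < tv ∧ SA < tv) +
      ind (A = sv) + ind (A = tv ∧ SA < tv) := by
  unfold ind; split_ifs <;> first | decide | (exfalso; omega)

lemma scalarB (A1 A2 A3 A4 B1 B2 x y : ZMod 2)
    (h1 : A1 + A2 + A3 + A4 = B1 + B2 + 1 + y) (h2 : B1 + B2 = 0) (h3 : x + y = 1) :
    0 + 1 + x + (0 + A1 + 0) + (A2 + A3 + A4) = 1 := by
  have htwo : (2 : ZMod 2) = 0 := by decide
  linear_combination h1 + h2 + h3 + htwo

lemma scalarA (U2 L0 B1 B2 : ZMod 2) (h1 : U2 + L0 = B1 + B2) (h2 : B1 + B2 = 0) :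
    1 + 1 + 1 + (0 + U2 + 0) + (L0 + 0 + 0) = 1 := by
  have htwo : (2 : ZMod 2) = 0 := by decide
  linear_combination h1 + h2 + htwo

lemma scalarC (U1 U2 U3 L0 B1 B2 x y : ZMod 2)
    (h1 : U1 + U2 + U3 + L0 = B1 + B2 + 1 + y) (h2 : B1 + B2 = 0) (h3 : x + y = 1) :
    0 + 1 + x + (U1 + U2 + U3) + (L0 + 0 + 0) = 1 := by
  have htwo : (2 : ZMod 2) = 0 := by decide
  linear_combination h1 + h2 + h3 + htwo

lemma surgery (σ : Perm (Fin n)) (s t M : Fin n)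
    (hs : σ s = M) (ht : σ M = t) (hsM : s < M) (htM : t < M)
    (hfix : ∀ x : Fin n, M < x → σ x = x) :
    (pF σ + pV σ + pU σ + pL σ) +
      (pF (σ * Equiv.swap s M) + pV (σ * Equiv.swap s M) +
        pU (σ * Equiv.swap s M) + pL (σ * Equiv.swap s M)) = 1 := by
  set τ := σ * Equiv.swap s M with hτdef
  have hne_sM : s ≠ M := ne_of_lt hsM
  have hsv : s.val < M.val := hsM
  have htv : t.val < M.val := htM
  -- basic Fin-level facts
  have hτM : τ M = M := by
    rw [hτdef, Equiv.Perm.mul_apply, Equiv.swap_apply_right, hs]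
  have hτs : τ s = t := by
    rw [hτdef, Equiv.Perm.mul_apply, Equiv.swap_apply_left, ht]
  have hτother : ∀ x : Fin n, x ≠ s → x ≠ M → τ x = σ x := fun x h1 h2 => by
    rw [hτdef, Equiv.Perm.mul_apply, Equiv.swap_apply_of_ne_of_ne h1 h2]
  have hinvM : σ⁻¹ M = s := by rw [← hs, Equiv.Perm.inv_apply_self]
  have hinvt : σ⁻¹ t = M := by rw [← ht, Equiv.Perm.inv_apply_self]
  have hτinv : ∀ x : Fin n, τ⁻¹ x = Equiv.swap s M (σ⁻¹ x) := by
    intro x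
    rw [hτdef, mul_inv_rev, Equiv.Perm.mul_apply, Equiv.swap_inv]
  have hτinvM : τ⁻¹ M = M := by rw [hτinv, hinvM, Equiv.swap_apply_left]
  have hτinvt : τ⁻¹ t = s := by rw [hτinv, hinvt, Equiv.swap_apply_right]
  have hτinvother : ∀ x : Fin n, x ≠ M → x ≠ t → τ⁻¹ x = σ⁻¹ x := by
    intro x h1 h2
    rw [hτinv]
    apply Equiv.swap_apply_of_ne_of_ne
    · intro e; exact h1 (by rw [← hs, ← e, Equiv.Perm.apply_inv_self])
    · intro e; exact h2 (by rw [← ht, ← e, Equiv.Perm.apply_inv_self])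
  -- val-level facts batteries
  have F1 : ∀ a : Fin n, (σ a).val = M.val → a.val = s.val := by
    intro a h
    have h' : σ a = M := Fin.val_injective h
    have : a = s := by rw [← hinvM, ← h', Equiv.Perm.inv_apply_self]
    exact congrArg Fin.val this
  have F2 : ∀ a : Fin n, a.val = s.val → (σ a).val = M.val := by
    intro a h
    rw [show a = s from Fin.val_injective h, hs]
  have F3 : ∀ a : Fin n, a.val = M.val → (σ a).val = t.val := by
    intro a h
    rw [show a = M from Fin.val_injective h, ht]
  have F4 : ∀ a : Fin n, M.val < (σ a).val → (σ a).val = a.val := by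
    intro a h
    have h1 : σ (σ a) = σ a := hfix (σ a) h
    exact congrArg Fin.val (σ.injective h1)
  have F5 : ∀ a : Fin n, M.val < a.val → (σ a).val = a.val := fun a h =>
    congrArg Fin.val (hfix a h)
  have F6 : ∀ a : Fin n, (σ a).val = t.val → a.val = M.val := by
    intro a h
    have h' : σ a = t := Fin.val_injective h
    have : a = M := by rw [← hinvt, ← h', Equiv.Perm.inv_apply_self]
    exact congrArg Fin.val this
  have G1 : ∀ a : Fin n, a.val = s.val → (τ a).val = t.val := by
    intro a h
    rw [show a = s from Fin.val_injective h, hτs]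
  have G2 : ∀ a : Fin n, a.val = M.val → (τ a).val = M.val := by
    intro a h
    rw [show a = M from Fin.val_injective h, hτM]
  have G3 : ∀ a : Fin n, a.val ≠ s.val → a.val ≠ M.val → (τ a).val = (σ a).val := by
    intro a h1 h2
    rw [hτother a (fun e => h1 (congrArg Fin.val e)) (fun e => h2 (congrArg Fin.val e))]
  have G5 : ∀ a : Fin n, M.val < a.val → (τ a).val = a.val := by
    intro a h
    rw [G3 a (by omega) (by omega)]
    exact F5 a h
  have G4 : ∀ a : Fin n, M.val < (τ a).val → (τ a).val = a.val := by
    intro a h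
    by_cases h1 : a.val = s.val
    · exfalso; rw [G1 a h1] at h; omega
    · by_cases h2 : a.val = M.val
      · exfalso; rw [G2 a h2] at h; omega
      · rw [G3 a h1 h2] at h ⊢; exact F4 a h
  have H1 : ∀ i : Fin n, i.val = M.val → (σ⁻¹ i).val = s.val := by
    intro i h
    rw [show i = M from Fin.val_injective h, hinvM]
  have H2 : ∀ i : Fin n, i.val = t.val → (σ⁻¹ i).val = M.val := by
    intro i h
    rw [show i = t from Fin.val_injective h, hinvt]
  have H3 : ∀ i : Fin n, i.val = M.val → (τ⁻¹ i).val = M.val := by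
    intro i h
    rw [show i = M from Fin.val_injective h, hτinvM]
  have H4 : ∀ i : Fin n, i.val = t.val → (τ⁻¹ i).val = s.val := by
    intro i h
    rw [show i = t from Fin.val_injective h, hτinvt]
  have H5 : ∀ i : Fin n, i.val ≠ M.val → i.val ≠ t.val → (τ⁻¹ i).val = (σ⁻¹ i).val := by
    intro i h1 h2
    rw [hτinvother i (fun e => h1 (congrArg Fin.val e)) (fun e => h2 (congrArg Fin.val e))]
  -- Delta F
  have ptwF : ∀ a : Fin n, ind ((σ a).val = a.val) + ind ((τ a).val = a.val)
      = ind (a.val = s.val ∧ t.val = s.val) + ind (a.val = M.val) := fun a =>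
    ptwF_nat a.val (σ a).val (τ a).val s.val t.val M.val
      (F2 a) (F3 a) (G1 a) (G2 a) (G3 a) hsv htv
  have dF : pF σ + pF τ = ind (t.val = s.val) + 1 := by
    unfold pF
    rw [single_reduce2 _ _ _ _ ptwF, sum_gate s (fun _ => t.val = s.val), sum_gate' M]
  -- Delta U
  have ptwU : ∀ a b : Fin n,
      ind (a.val < b.val ∧ b.val < (σ a).val ∧ (σ a).val < (σ b).val) +
        ind (a.val < b.val ∧ b.val < (τ a).val ∧ (τ a).val < (τ b).val) =
      ind (a.val = s.val ∧ s.val < b.val ∧ b.val < t.val ∧ t.val < (σ b).val) +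
        ind (b.val = s.val ∧ a.val < s.val ∧ s.val < (σ a).val ∧ (σ a).val < M.val) +
        ind (b.val = s.val ∧ a.val < s.val ∧ s.val < (σ a).val ∧ (σ a).val < t.val) := fun a b =>
    ptwU_nat a.val b.val (σ a).val (σ b).val (τ a).val (τ b).val s.val t.val M.val
      (F2 a) (F3 a) (G1 a) (G2 a) (G3 a)
      (F1 b) (F2 b) (F3 b) (F4 b) (G1 b) (G2 b) (G3 b) hsv htv
  have dU : pU σ + pU τ =
      (∑ b : Fin n, ind (s.val < b.val ∧ b.val < t.val ∧ t.val < (σ b).val)) +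
        (∑ a : Fin n, ind (a.val < s.val ∧ s.val < (σ a).val ∧ (σ a).val < M.val)) +
        (∑ a : Fin n, ind (a.val < s.val ∧ s.val < (σ a).val ∧ (σ a).val < t.val)) := by
    unfold pU
    rw [double_reduce _ _ _ _ _ ptwU, gate_outer s, gate_inner s, gate_inner s]
  -- Delta L
  have ptwL : ∀ a b : Fin n,
      ind (a.val < b.val ∧ (σ a).val < (σ b).val ∧ (σ b).val < a.val) +
        ind (a.val < b.val ∧ (τ a).val < (τ b).val ∧ (τ b).val < a.val) =
      ind (b.val = M.val ∧ a.val < M.val ∧ (σ a).val < t.val ∧ t.val < a.val) +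
        ind (a.val = s.val ∧ s.val < b.val ∧ t.val < (σ b).val ∧ (σ b).val < s.val) +
        ind (b.val = s.val ∧ a.val < s.val ∧ (σ a).val < t.val ∧ t.val < a.val) := fun a b =>
    ptwL_nat a.val b.val (σ a).val (σ b).val (τ a).val (τ b).val s.val t.val M.val
      (F2 a) (F3 a) (G1 a) (G3 a)
      (F2 b) (F3 b) (F5 b) (G1 b) (G2 b) (G3 b) (G5 b) hsv htv
  have dL : pL σ + pL τ =
      (∑ a : Fin n, ind (a.val < M.val ∧ (σ a).val < t.val ∧ t.val < a.val)) +
        (∑ b : Fin n, ind (s.val < b.val ∧ t.val < (σ b).val ∧ (σ b).val < s.val)) +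
        (∑ a : Fin n, ind (a.val < s.val ∧ (σ a).val < t.val ∧ t.val < a.val)) := by
    unfold pL
    rw [double_reduce _ _ _ _ _ ptwL, gate_inner M, gate_outer s, gate_inner s]
  -- useful disequalities
  have hrs : (σ⁻¹ s).val ≠ s.val := by
    intro e
    have : σ⁻¹ s = s := Fin.val_injective e
    have : σ s = s := by conv_lhs => rw [← this, Equiv.Perm.apply_inv_self]
    rw [hs] at this
    exact hne_sM (Fin.val_injective (congrArg Fin.val this)).symm
  have hstt : (σ t).val ≠ t.val := by
    intro e
    have h' : σ t = t := Fin.val_injective e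
    have : σ⁻¹ t = t := by rw [← h', Equiv.Perm.inv_apply_self]; exact h'.symm
    rw [hinvt] at this
    exact absurd (congrArg Fin.val this) (by omega)
  -- scalar facts
  have hxy : ind (s.val < (σ⁻¹ s).val) + ind ((σ⁻¹ s).val < s.val) = 1 := by
    unfold ind; split_ifs <;> first | decide | (exfalso; omega)
  have hxy' : ind (t.val < (σ t).val) + ind ((σ t).val < t.val) = 1 := by
    unfold ind; split_ifs <;> first | decide | (exfalso; omega)
  have rearr : (pF σ + pV σ + pU σ + pL σ) + (pF τ + pV τ + pU τ + pL τ) =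
      (pF σ + pF τ) + (pV σ + pV τ) + (pU σ + pU τ) + (pL σ + pL τ) := by ring
  rw [rearr]
  -- main case split
  rcases Nat.lt_trichotomy t.val s.val with hts | hts | hts
  · -- Case B : t < s
    have ptwV : ∀ i : Fin n,
        ind (i.val < (σ⁻¹ i).val ∧ i.val < (σ i).val) +
          ind (i.val < (τ⁻¹ i).val ∧ i.val < (τ i).val) =
        ind (i.val = s.val ∧ s.val < (σ⁻¹ i).val) := fun i =>
      ptwVB_nat i.val (σ i).val (τ i).val (σ⁻¹ i).val (τ⁻¹ i).val s.val t.val M.val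
        (F2 i) (G1 i) (G3 i) (H1 i) (H2 i) (H3 i) (H4 i) (H5 i) hsv htv hts
    have dV : pV σ + pV τ = ind (s.val < (σ⁻¹ s).val) := by
      unfold pV
      rw [single_reduce _ _ _ ptwV, sum_gate s (fun i => s.val < (σ⁻¹ i).val)]
    have hU1 : (∑ b : Fin n, ind (s.val < b.val ∧ b.val < t.val ∧ t.val < (σ b).val)) = 0 :=
      sum_ind_zero _ (fun a => by omega)
    have hU3 : (∑ a : Fin n, ind (a.val < s.val ∧ s.val < (σ a).val ∧ (σ a).val < t.val)) = 0 :=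
      sum_ind_zero _ (fun a => by omega)
    have ptwB : ∀ i : Fin n,
        ind (i.val < s.val ∧ s.val < (σ i).val ∧ (σ i).val < M.val) +
          ind (i.val < M.val ∧ (σ i).val < t.val ∧ t.val < i.val) +
          ind (s.val < i.val ∧ t.val < (σ i).val ∧ (σ i).val < s.val) +
          ind (i.val < s.val ∧ (σ i).val < t.val ∧ t.val < i.val) =
        ind (i.val < s.val ∧ ¬ (σ i).val < s.val) +
          ind (¬ i.val < s.val ∧ (σ i).val < s.val) +
          ind (i.val = M.val) + ind ((σ i).val = s.val ∧ i.val < s.val) := fun i =>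
      asmB_nat i.val (σ i).val s.val t.val M.val
        (F1 i) (F2 i) (F3 i) (F4 i) (F5 i) (F6 i) hsv htv hts
    have combB := quad_reduce _ _ _ _ _ _ _ _ ptwB
    rw [sum_gate' M, sum_gate_sigma σ s (fun a => a.val < s.val)] at combB
    have hbal := balance σ s.val
    have e0 : ind (t.val = s.val) = (0 : ZMod 2) := by unfold ind; rw [if_neg (by omega)]
    rw [dF, dV, dU, dL, hU1, hU3, e0]
    exact scalarB _ _ _ _ _ _ _ _ combB hbal hxy
  · -- Case A : t = s
    have ptwV : ∀ i : Fin n,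
        ind (i.val < (σ⁻¹ i).val ∧ i.val < (σ i).val) +
          ind (i.val < (τ⁻¹ i).val ∧ i.val < (τ i).val) =
        ind (i.val = s.val) := fun i =>
      ptwVA_nat i.val (σ i).val (τ i).val (σ⁻¹ i).val (τ⁻¹ i).val s.val t.val M.val
        (F2 i) (G1 i) (G3 i) (H1 i) (H2 i) (H3 i) (H5 i) hsv htv hts
    have dV : pV σ + pV τ = 1 := by
      unfold pV
      rw [single_reduce _ _ _ ptwV, sum_gate' s]
    have hU1 : (∑ b : Fin n, ind (s.val < b.val ∧ b.val < t.val ∧ t.val < (σ b).val)) = 0 :=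
      sum_ind_zero _ (fun a => by omega)
    have hU3 : (∑ a : Fin n, ind (a.val < s.val ∧ s.val < (σ a).val ∧ (σ a).val < t.val)) = 0 :=
      sum_ind_zero _ (fun a => by omega)
    have hL1 : (∑ b : Fin n, ind (s.val < b.val ∧ t.val < (σ b).val ∧ (σ b).val < s.val)) = 0 :=
      sum_ind_zero _ (fun a => by omega)
    have hL2 : (∑ a : Fin n, ind (a.val < s.val ∧ (σ a).val < t.val ∧ t.val < a.val)) = 0 :=
      sum_ind_zero _ (fun a => by omega)
    have ptwA : ∀ i : Fin n,
        ind (i.val < s.val ∧ s.val < (σ i).val ∧ (σ i).val < M.val) +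
          ind (i.val < M.val ∧ (σ i).val < t.val ∧ t.val < i.val) =
        ind (i.val < s.val ∧ ¬ (σ i).val < s.val) +
          ind (¬ i.val < s.val ∧ (σ i).val < s.val) := fun i =>
      asmA_nat i.val (σ i).val s.val t.val M.val
        (F1 i) (F2 i) (F3 i) (F4 i) (F5 i) (F6 i) hsv htv hts
    have combA := pair_reduce _ _ _ _ ptwA
    have hbal := balance σ s.val
    have e1 : ind (t.val = s.val) = (1 : ZMod 2) := by unfold ind; rw [if_pos hts]
    rw [dF, dV, dU, dL, hU1, hU3, hL1, hL2, e1]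
    exact scalarA _ _ _ _ combA hbal
  · -- Case C : s < t
    have ptwV : ∀ i : Fin n,
        ind (i.val < (σ⁻¹ i).val ∧ i.val < (σ i).val) +
          ind (i.val < (τ⁻¹ i).val ∧ i.val < (τ i).val) =
        ind (i.val = t.val ∧ t.val < (σ i).val) := fun i =>
      ptwVC_nat i.val (σ i).val (τ i).val (σ⁻¹ i).val (τ⁻¹ i).val s.val t.val M.val
        (F2 i) (G1 i) (G3 i) (H1 i) (H2 i) (H3 i) (H4 i) (H5 i) hsv htv hts
    have dV : pV σ + pV τ = ind (t.val < (σ t).val) := by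
      unfold pV
      rw [single_reduce _ _ _ ptwV, sum_gate t (fun i => t.val < (σ i).val)]
    have hL1 : (∑ b : Fin n, ind (s.val < b.val ∧ t.val < (σ b).val ∧ (σ b).val < s.val)) = 0 :=
      sum_ind_zero _ (fun a => by omega)
    have hL2 : (∑ a : Fin n, ind (a.val < s.val ∧ (σ a).val < t.val ∧ t.val < a.val)) = 0 :=
      sum_ind_zero _ (fun a => by omega)
    have ptwC : ∀ i : Fin n,
        ind (s.val < i.val ∧ i.val < t.val ∧ t.val < (σ i).val) +
          ind (i.val < s.val ∧ s.val < (σ i).val ∧ (σ i).val < M.val) +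
          ind (i.val < s.val ∧ s.val < (σ i).val ∧ (σ i).val < t.val) +
          ind (i.val < M.val ∧ (σ i).val < t.val ∧ t.val < i.val) =
        ind (i.val < t.val ∧ ¬ (σ i).val < t.val) +
          ind (¬ i.val < t.val ∧ (σ i).val < t.val) +
          ind (i.val = s.val) + ind (i.val = t.val ∧ (σ i).val < t.val) := fun i =>
      asmC_nat i.val (σ i).val s.val t.val M.val
        (F1 i) (F2 i) (F3 i) (F4 i) (F5 i) (F6 i) hsv htv hts
    have combC := quad_reduce _ _ _ _ _ _ _ _ ptwC
    rw [sum_gate' s, sum_gate t (fun a => (σ a).val < t.val)] at combC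
    have hbal := balance σ t.val
    have e0 : ind (t.val = s.val) = (0 : ZMod 2) := by unfold ind; rw [if_neg (by omega)]
    rw [dF, dV, dU, dL, hL1, hL2, e0]
    exact scalarC _ _ _ _ _ _ _ _ combC hbal hxy'

lemma key_one : pF (1 : Perm (Fin n)) + pV (1 : Perm (Fin n)) + pU (1 : Perm (Fin n)) + pL (1 : Perm (Fin n)) = (n : ZMod 2) + eps (1 : Perm (Fin n)) := by
  have h1 : pF (1 : Perm (Fin n)) = (n : ZMod 2) := by
    unfold pF
    have hp : ∀ i : Fin n, ind ((((1 : Perm (Fin n))) i).val = i.val) = 1 := fun i => by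
      unfold ind; rw [if_pos (by rw [Equiv.Perm.one_apply])]
    rw [Finset.sum_congr rfl fun i _ => hp i, Finset.sum_const, Finset.card_univ,
      Fintype.card_fin, nsmul_eq_mul, mul_one]
  have h2 : pV (1 : Perm (Fin n)) = 0 := by
    unfold pV
    exact sum_ind_zero _ (fun i => by simp)
  have h3 : pU (1 : Perm (Fin n)) = 0 := by
    unfold pU
    refine Finset.sum_eq_zero fun a _ => Finset.sum_eq_zero fun b _ => ?_
    unfold ind
    rw [if_neg (by simp only [Equiv.Perm.one_apply]; omega)]
  have h4 : pL (1 : Perm (Fin n)) = 0 := by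
    unfold pL
    refine Finset.sum_eq_zero fun a _ => Finset.sum_eq_zero fun b _ => ?_
    unfold ind
    rw [if_neg (by simp only [Equiv.Perm.one_apply]; omega)]
  have h5 : eps (1 : Perm (Fin n)) = 0 := by
    unfold eps
    rw [Equiv.Perm.sign_one, if_pos rfl]
  rw [h1, h2, h3, h4, h5]
  ring

lemma final5 : ∀ a b nn e et : ZMod 2, a + b = 1 → b = nn + et → et = e + 1 → a = nn + e := by
  decide

lemma key : ∀ (k : ℕ) (σ : Perm (Fin n)), σ.support.card ≤ k →
    pF σ + pV σ + pU σ + pL σ = (n : ZMod 2) + eps σ := by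
  intro k
  induction k with
  | zero =>
    intro σ h
    have hσ : σ = 1 := by
      rw [← Equiv.Perm.support_eq_empty_iff]
      exact Finset.card_eq_zero.mp (Nat.le_zero.mp h)
    subst hσ
    exact key_one
  | succ k ih =>
    intro σ h
    by_cases hσ : σ = 1
    · subst hσ; exact key_one
    · have hne : σ.support.Nonempty := by
        rw [Finset.nonempty_iff_ne_empty]
        simpa [ne_eq, Equiv.Perm.support_eq_empty_iff] using hσ
      have hMmem : σ.support.max' hne ∈ σ.support := σ.support.max'_mem hne
      set M := σ.support.max' hne with hMdef
      have hM : σ M ≠ M := Equiv.Perm.mem_support.mp hMmem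
      have hfix : ∀ x : Fin n, M < x → σ x = x := by
        intro x hx
        by_contra hc
        exact absurd (Finset.le_max' _ x (Equiv.Perm.mem_support.mpr hc)) (not_le.mpr hx)
      have hs : σ (σ⁻¹ M) = M := Equiv.Perm.apply_inv_self σ M
      have hsne : σ⁻¹ M ≠ M := by
        intro e
        have h' : σ (σ⁻¹ M) = σ M := congrArg σ e
        rw [hs] at h'
        exact hM h'.symm
      have hsmem : σ⁻¹ M ∈ σ.support := by
        rw [Equiv.Perm.mem_support, hs]
        exact Ne.symm hsne
      have hsM : σ⁻¹ M < M := lt_of_le_of_ne (Finset.le_max' _ _ hsmem) hsne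
      have htmem : σ M ∈ σ.support := by
        rw [Equiv.Perm.mem_support]
        intro e
        exact hM (σ.injective e)
      have htM : σ M < M := lt_of_le_of_ne (Finset.le_max' _ _ htmem) hM
      have hsur := surgery σ (σ⁻¹ M) (σ M) M hs rfl hsM htM hfix
      set τ := σ * Equiv.swap (σ⁻¹ M) M with hτdef
      have hτM : τ M = M := by
        rw [hτdef, Equiv.Perm.mul_apply, Equiv.swap_apply_right, hs]
      have hsub : τ.support ⊆ σ.support.erase M := by
        intro x hx
        rw [Finset.mem_erase]
        constructor
        · intro e
          subst e
          exact (Equiv.Perm.mem_support.mp hx) hτM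
        · rw [Equiv.Perm.mem_support] at hx ⊢
          intro e
          apply hx
          by_cases hxs : x = σ⁻¹ M
          · exfalso
            rw [hxs] at e
            rw [hs] at e
            exact hsne e.symm
          · by_cases hxM : x = M
            · subst hxM; exact hτM
            · rw [hτdef, Equiv.Perm.mul_apply, Equiv.swap_apply_of_ne_of_ne hxs hxM, e]
      have hcard : τ.support.card ≤ k := by
        have h1 : (σ.support.erase M).card = σ.support.card - 1 :=
          Finset.card_erase_of_mem hMmem
        have h2 := Finset.card_le_card hsub
        omega
      have hIH := ih τ hcard
      have heps : eps τ = eps σ + 1 := eps_swap σ (σ⁻¹ M) M hsne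
      exact final5 _ _ _ _ _ hsur hIH heps

end CycParityAux


theorem cyc_mod_two_eq_fix_add_cval_add_cross {n : ℕ} (σ : Equiv.Perm (Fin n)) :
    cycCt σ % 2 = (fixCt σ + cvalCt σ + ucrossCt σ + lcrossCt σ) % 2 := by
  have hkey := CycParityAux.key σ.support.card σ le_rfl
  have h1 : ((cycCt σ : ℕ) : ZMod 2) =
      ((fixCt σ + cvalCt σ + ucrossCt σ + lcrossCt σ : ℕ) : ZMod 2) := by
    push_cast
    rw [CycParityAux.fix_cast, CycParityAux.cval_cast, CycParityAux.ucross_cast,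
      CycParityAux.lcross_cast]
    have h2 := CycParityAux.cyc_eps σ
    push_cast at h2
    rw [h2, hkey]
  exact (ZMod.natCast_eq_natCast_iff' _ _ _).mp h1
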